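/- For a maximised context tree of maximal depth D over an m-ary alphabet, where each node s at depth d < D has maximised probability P_m^s = max{γ·P_e(a_s), (1-γ)·∏_{j=0}^{m-1} P_m^{js}} and each node at depth D has P_m^s = P_e(a_s), the root maximised probability satisfies P_m^λ = max_{S ∈ C_D} π_D(S) ∏_{s∈S} P_e(a_s), with π_D(S) = (1-γ)^{(|S|-1)/(m-1)} · γ^{|S| - L_D(S)}. -/

import Mathlib

open Finset

/-- All strings of length exactly `k` over the alphabet `Fin m`. -/
def listsLen (m : ℕ) : ℕ → Finset (List (Fin m))
  | 0 => {[]}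
  | k + 1 => ((Finset.univ : Finset (Fin m)) ×ˢ listsLen m k).image (fun p => p.1 :: p.2)

/-- All strings of length at most `D` over the alphabet `Fin m`. -/
def listsUpTo (m D : ℕ) : Finset (List (Fin m)) :=
  (Finset.range (D + 1)).biUnion (fun k => listsLen m k)

/-- `C_D`: all complete and proper context sets (models) of depth at most `D`. -/
def contextSets (m D : ℕ) : Finset (Finset (List (Fin m))) :=
  (listsUpTo m D).powerset.filter
    (fun S => (∀ s ∈ S, ∀ t ∈ S, s <:+ t → s = t) ∧
      ∀ l ∈ listsLen m D, ∃ s ∈ S, s <:+ l)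

/-- The prior `π_D(S) = (1-γ)^((|S|-1)/(m-1)) γ^(|S| - L_D(S))` on models. -/
noncomputable def modelPrior (m : ℕ) (γ : ℝ) (D : ℕ) (S : Finset (List (Fin m))) : ℝ :=
  (1 - γ) ^ ((S.card - 1) / (m - 1)) * γ ^ (S.card - (S.filter (fun s => s.length = D)).card)

/-- The maximised probability `P_m^s` of a node `s` with remaining depth `d`:
at remaining depth `0` (i.e. at maximal depth `D`) it is `P_e(a_s)`, and
otherwise `max { γ P_e(a_s), (1-γ) ∏_j P_m^{js} }`. -/
noncomputable def Pmax (m : ℕ) (γ : ℝ) (Pe : List (Fin m) → ℝ) : ℕ → List (Fin m) → ℝ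
  | 0, s => Pe s
  | d + 1, s => max (γ * Pe s) ((1 - γ) * ∏ j : Fin m, Pmax m γ Pe d (j :: s))

/- ### Auxiliary lemmas -/

lemma mem_listsLen {m k : ℕ} {l : List (Fin m)} : l ∈ listsLen m k ↔ l.length = k := by
  induction k generalizing l with
  | zero => simp [listsLen, List.length_eq_zero_iff]
  | succ k ih =>
    simp only [listsLen, Finset.mem_image, Finset.mem_product, Finset.mem_univ, true_and]
    constructor
    · rintro ⟨⟨a, t⟩, ht, rfl⟩; simp [ih.mp ht]
    · intro h
      cases l with
      | nil => simp at h
      | cons a t => exact ⟨(a, t), ih.mpr (by simpa using h), rfl⟩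

lemma mem_listsUpTo {m D : ℕ} {l : List (Fin m)} : l ∈ listsUpTo m D ↔ l.length ≤ D := by
  simp only [listsUpTo, Finset.mem_biUnion, Finset.mem_range, Nat.lt_succ_iff, mem_listsLen]
  constructor
  · rintro ⟨k, hk, rfl⟩; exact hk
  · intro h; exact ⟨l.length, h, rfl⟩

lemma mem_contextSets {m D : ℕ} {S : Finset (List (Fin m))} :
    S ∈ contextSets m D ↔ (∀ s ∈ S, s.length ≤ D) ∧
      (∀ s ∈ S, ∀ t ∈ S, s <:+ t → s = t) ∧ ∀ l ∈ listsLen m D, ∃ s ∈ S, s <:+ l := by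
  simp only [contextSets, Finset.mem_filter, Finset.mem_powerset, Finset.subset_iff,
    mem_listsUpTo, and_assoc]

lemma root_singleton_of_mem {m D : ℕ} {S : Finset (List (Fin m))}
    (hS : S ∈ contextSets m D) (h0 : ([] : List (Fin m)) ∈ S) : S = {[]} := by
  rw [mem_contextSets] at hS
  ext t
  simp only [Finset.mem_singleton]
  constructor
  · intro ht; exact (hS.2.1 [] h0 t ht List.nil_suffix).symm
  · rintro rfl; exact h0

lemma singleton_root_mem (m D : ℕ) : ({[]} : Finset (List (Fin m))) ∈ contextSets m D := by
  rw [mem_contextSets]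
  refine ⟨by simp, by simp, fun l _ => ⟨[], by simp, List.nil_suffix⟩⟩

lemma contextSets_nonempty {m D : ℕ} (hm : 1 ≤ m) {S : Finset (List (Fin m))}
    (hS : S ∈ contextSets m D) : S.Nonempty := by
  rw [mem_contextSets] at hS
  obtain ⟨s, hs, -⟩ := hS.2.2 (List.replicate D ⟨0, hm⟩) (mem_listsLen.mpr (by simp))
  exact ⟨s, hs⟩

lemma concat_suffix_concat {m : ℕ} {a b : List (Fin m)} {j j' : Fin m} :
    a ++ [j] <:+ b ++ [j'] ↔ j = j' ∧ a <:+ b := by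
  constructor
  · rintro ⟨u, hu⟩
    rw [← List.append_assoc] at hu
    obtain ⟨h1, h2⟩ := List.append_inj' hu rfl
    exact ⟨by simpa using h2, ⟨u, h1⟩⟩
  · rintro ⟨rfl, u, hu⟩
    exact ⟨u, by rw [← List.append_assoc, hu]⟩

lemma concat_injective {m : ℕ} (j : Fin m) :
    Function.Injective (fun t : List (Fin m) => t ++ [j]) :=
  fun _ _ h => List.append_cancel_right h

/-- The child context set in direction `j`. -/
def childSet (m d : ℕ) (S : Finset (List (Fin m))) (j : Fin m) : Finset (List (Fin m)) :=
  (listsUpTo m d).filter (fun t => t ++ [j] ∈ S)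

/-- The union of context sets, one per child. -/
def unionSet (m : ℕ) (T : Fin m → Finset (List (Fin m))) : Finset (List (Fin m)) :=
  Finset.univ.biUnion (fun j => (T j).image (fun t => t ++ [j]))

lemma mem_unionSet {m : ℕ} {T : Fin m → Finset (List (Fin m))} {x : List (Fin m)} :
    x ∈ unionSet m T ↔ ∃ j, ∃ t ∈ T j, t ++ [j] = x := by
  simp [unionSet]

lemma unionSet_disjoint {m : ℕ} (T : Fin m → Finset (List (Fin m))) :
    ∀ j ∈ (Finset.univ : Finset (Fin m)), ∀ j' ∈ Finset.univ, j ≠ j' →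
      Disjoint ((T j).image (fun t => t ++ [j])) ((T j').image (fun t => t ++ [j'])) := by
  intro j _ j' _ hjj'
  rw [Finset.disjoint_left]
  rintro x hx hx'
  obtain ⟨t, -, rfl⟩ := Finset.mem_image.mp hx
  obtain ⟨t', -, h⟩ := Finset.mem_image.mp hx'
  obtain ⟨-, h2⟩ := List.append_inj' h rfl
  exact hjj' (by simpa using h2.symm)

lemma unionSet_card {m : ℕ} (T : Fin m → Finset (List (Fin m))) :
    (unionSet m T).card = ∑ j, (T j).card := by
  rw [unionSet, Finset.card_biUnion (unionSet_disjoint T)]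
  exact Finset.sum_congr rfl fun j _ =>
    Finset.card_image_of_injective _ (concat_injective j)

lemma unionSet_prod {m : ℕ} (T : Fin m → Finset (List (Fin m))) (f : List (Fin m) → ℝ) :
    ∏ x ∈ unionSet m T, f x = ∏ j, ∏ t ∈ T j, f (t ++ [j]) := by
  rw [unionSet, Finset.prod_biUnion]
  · exact Finset.prod_congr rfl fun j _ =>
      Finset.prod_image (fun a _ b _ h => concat_injective j h)
  · intro j _ j' _ h
    exact unionSet_disjoint T j (Finset.mem_univ j) j' (Finset.mem_univ j') h

lemma unionSet_filter_card {m d : ℕ} (T : Fin m → Finset (List (Fin m))) :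
    ((unionSet m T).filter (fun s => s.length = d + 1)).card
      = ∑ j, ((T j).filter (fun s => s.length = d)).card := by
  rw [unionSet, Finset.filter_biUnion, Finset.card_biUnion]
  · refine Finset.sum_congr rfl fun j _ => ?_
    rw [Finset.filter_image, Finset.card_image_of_injective _ (concat_injective j)]
    congr 1
    apply Finset.filter_congr
    intro t _
    simp
  · intro j _ j' _ h
    exact Finset.disjoint_filter_filter
      (unionSet_disjoint T j (Finset.mem_univ j) j' (Finset.mem_univ j') h)

lemma nil_not_mem_unionSet {m : ℕ} (T : Fin m → Finset (List (Fin m))) :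
    ([] : List (Fin m)) ∉ unionSet m T := by
  rw [mem_unionSet]
  rintro ⟨j, t, -, h⟩
  simpa using congrArg List.length h

lemma unionSet_mem_contextSets {m d : ℕ} {T : Fin m → Finset (List (Fin m))}
    (hT : ∀ j, T j ∈ contextSets m d) : unionSet m T ∈ contextSets m (d + 1) := by
  rw [mem_contextSets]
  refine ⟨?_, ?_, ?_⟩
  · intro s hs
    obtain ⟨j, t, ht, rfl⟩ := mem_unionSet.mp hs
    have := (mem_contextSets.mp (hT j)).1 t ht
    simp; omega
  · intro s hs t ht hst
    obtain ⟨j, a, ha, rfl⟩ := mem_unionSet.mp hs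
    obtain ⟨j', b, hb, rfl⟩ := mem_unionSet.mp ht
    obtain ⟨rfl, hab⟩ := concat_suffix_concat.mp hst
    rw [(mem_contextSets.mp (hT j)).2.1 a ha b hb hab]
  · intro l hl
    have hlen : l.length = d + 1 := mem_listsLen.mp hl
    have hne : l ≠ [] := by intro h; simp [h] at hlen
    set j := l.getLast hne with hj
    obtain ⟨t, ht, htl⟩ := (mem_contextSets.mp (hT j)).2.2 l.dropLast
      (mem_listsLen.mpr (by simp [List.length_dropLast, hlen]))
    refine ⟨t ++ [j], mem_unionSet.mpr ⟨j, t, ht, rfl⟩, ?_⟩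
    have : t ++ [j] <:+ l.dropLast ++ [j] := concat_suffix_concat.mpr ⟨rfl, htl⟩
    rwa [List.dropLast_append_getLast hne] at this

lemma childSet_mem_contextSets {m d : ℕ} {S : Finset (List (Fin m))}
    (hS : S ∈ contextSets m (d + 1)) (h0 : ([] : List (Fin m)) ∉ S) (j : Fin m) :
    childSet m d S j ∈ contextSets m d := by
  obtain ⟨hlen, hprop, hcomp⟩ := mem_contextSets.mp hS
  rw [mem_contextSets]
  refine ⟨?_, ?_, ?_⟩
  · intro s hs
    exact mem_listsUpTo.mp (Finset.mem_filter.mp hs).1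
  · intro s hs t ht hst
    have hs' := (Finset.mem_filter.mp hs).2
    have ht' := (Finset.mem_filter.mp ht).2
    exact concat_injective j (hprop _ hs' _ ht' (concat_suffix_concat.mpr ⟨rfl, hst⟩))
  · intro l hl
    have hlen' : l.length = d := mem_listsLen.mp hl
    obtain ⟨s, hs, hsl⟩ := hcomp (l ++ [j]) (mem_listsLen.mpr (by simp [hlen']))
    have hne : s ≠ [] := fun h => h0 (h ▸ hs)
    obtain ⟨u, hu⟩ := hsl
    rw [← List.dropLast_append_getLast hne, ← List.append_assoc] at hu
    obtain ⟨h1, h2⟩ := List.append_inj' hu rfl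
    have hgl : s.getLast hne = j := by simpa using h2
    refine ⟨s.dropLast, Finset.mem_filter.mpr ⟨mem_listsUpTo.mpr ?_, ?_⟩, ⟨u, h1⟩⟩
    · have := hlen s hs
      have := @List.length_dropLast _ s
      omega
    · rw [← hgl, List.dropLast_append_getLast hne]; exact hs

lemma decomp {m d : ℕ} {S : Finset (List (Fin m))}
    (hS : S ∈ contextSets m (d + 1)) (h0 : ([] : List (Fin m)) ∉ S) :
    S = unionSet m (childSet m d S) := by
  obtain ⟨hlen, -, -⟩ := mem_contextSets.mp hS
  ext t
  rw [mem_unionSet]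
  constructor
  · intro ht
    have hne : t ≠ [] := fun h => h0 (h ▸ ht)
    refine ⟨t.getLast hne, t.dropLast, Finset.mem_filter.mpr ⟨mem_listsUpTo.mpr ?_, ?_⟩,
      List.dropLast_append_getLast hne⟩
    · have := hlen t ht
      have := @List.length_dropLast _ t
      omega
    · rw [List.dropLast_append_getLast hne]; exact ht
  · rintro ⟨j, a, ha, rfl⟩
    exact (Finset.mem_filter.mp ha).2

lemma card_sub_one_dvd {m : ℕ} (hm : 2 ≤ m) :
    ∀ (d : ℕ) (S : Finset (List (Fin m))), S ∈ contextSets m d → (m - 1) ∣ (S.card - 1) := by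
  intro d
  induction d with
  | zero =>
    intro S hS
    obtain ⟨s, hs, -⟩ := (mem_contextSets.mp hS).2.2 []
      (mem_listsLen.mpr (by simp))
    have : s = [] := List.length_eq_zero_iff.mp (Nat.le_zero.mp ((mem_contextSets.mp hS).1 s hs))
    rw [root_singleton_of_mem hS (this ▸ hs)]
    simp
  | succ d ih =>
    intro S hS
    by_cases h0 : ([] : List (Fin m)) ∈ S
    · rw [root_singleton_of_mem hS h0]; simp
    · have hd := decomp hS h0
      rw [hd, unionSet_card]
      have h1 : ∀ j, 1 ≤ (childSet m d S j).card := fun j =>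
        Finset.card_pos.mpr (contextSets_nonempty (by omega) (childSet_mem_contextSets hS h0 j))
      have hsum : ∑ j, (childSet m d S j).card
          = (∑ j, ((childSet m d S j).card - 1)) + m := by
        have h2 : ∑ j, (childSet m d S j).card
            = ∑ j : Fin m, (((childSet m d S j).card - 1) + 1) :=
          Finset.sum_congr rfl fun j _ => by have := h1 j; omega
        rw [h2, Finset.sum_add_distrib]
        simp
      rw [hsum]
      have : (∑ j, ((childSet m d S j).card - 1)) + m - 1
          = (∑ j, ((childSet m d S j).card - 1)) + (m - 1) := by omega
      rw [this]
      exact Nat.dvd_add (Finset.dvd_sum fun j _ =>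
        ih _ (childSet_mem_contextSets hS h0 j)) dvd_rfl

lemma modelPrior_unionSet {m d : ℕ} (hm : 2 ≤ m) (γ : ℝ)
    {T : Fin m → Finset (List (Fin m))} (hT : ∀ j, T j ∈ contextSets m d) :
    modelPrior m γ (d + 1) (unionSet m T) = (1 - γ) * ∏ j, modelPrior m γ d (T j) := by
  have h1 : ∀ j, 1 ≤ (T j).card := fun j =>
    Finset.card_pos.mpr (contextSets_nonempty (by omega) (hT j))
  have hdvd : ∀ j, (m - 1) ∣ ((T j).card - 1) := fun j => card_sub_one_dvd hm d (T j) (hT j)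
  choose k hk using hdvd
  have hLle : ∀ j, ((T j).filter (fun s => s.length = d)).card ≤ (T j).card :=
    fun j => Finset.card_filter_le _ _
  -- exponent of (1-γ)
  have e1 : ((unionSet m T).card - 1) / (m - 1) = (∑ j, k j) + 1 := by
    rw [unionSet_card]
    have hsum : ∑ j, (T j).card = ((m - 1) * ∑ j, k j) + m := by
      have h2 : ∑ j, (T j).card = ∑ j : Fin m, ((m - 1) * k j + 1) :=
        Finset.sum_congr rfl fun j _ => by have := hk j; have := h1 j; omega
      rw [h2, Finset.sum_add_distrib, ← Finset.mul_sum]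
      simp
    rw [hsum]
    have h2 : (m - 1) * (∑ j, k j) + m - 1 = (m - 1) * (∑ j, k j) + (m - 1) := by omega
    rw [h2, Nat.add_div_right _ (by omega : 0 < m - 1),
      Nat.mul_div_cancel_left _ (by omega : 0 < m - 1)]
  -- exponent of γ
  have e2 : (unionSet m T).card - ((unionSet m T).filter (fun s => s.length = d + 1)).card
      = ∑ j, ((T j).card - ((T j).filter (fun s => s.length = d)).card) := by
    rw [unionSet_card, unionSet_filter_card,
      Finset.sum_tsub_distrib _ (fun j _ => hLle j)]
  unfold modelPrior
  rw [e1, e2]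
  have hq : ∀ j : Fin m, ((T j).card - 1) / (m - 1) = k j := by
    intro j; rw [hk j, Nat.mul_div_cancel_left _ (by omega : 0 < m - 1)]
  simp only [hq]
  rw [Finset.prod_mul_distrib, Finset.prod_pow_eq_pow_sum, Finset.prod_pow_eq_pow_sum,
    pow_succ]
  ring

lemma modelPrior_singleton_zero {m : ℕ} (γ : ℝ) :
    modelPrior m γ 0 ({[]} : Finset (List (Fin m))) = 1 := by
  unfold modelPrior
  rw [Finset.filter_singleton]
  simp

lemma modelPrior_singleton {m : ℕ} (γ : ℝ) (d : ℕ) :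
    modelPrior m γ (d + 1) ({[]} : Finset (List (Fin m))) = γ := by
  unfold modelPrior
  rw [Finset.filter_singleton]
  simp

lemma key {m : ℕ} (hm : 2 ≤ m) (γ : ℝ) (hγ : γ ∈ Set.Ioo (0:ℝ) 1)
    (Pe : List (Fin m) → ℝ) (hPe : ∀ s, 0 < Pe s) :
    ∀ (d : ℕ) (s : List (Fin m)),
      IsGreatest {x : ℝ | ∃ S ∈ contextSets m d, x = modelPrior m γ d S * ∏ t ∈ S, Pe (t ++ s)}
        (Pmax m γ Pe d s) := by
  obtain ⟨hγ0, hγ1⟩ := hγ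
  intro d
  induction d with
  | zero =>
    intro s
    constructor
    · refine ⟨{[]}, singleton_root_mem m 0, ?_⟩
      show Pmax m γ Pe 0 s = _
      rw [Pmax, modelPrior_singleton_zero]
      simp
    · rintro x ⟨S, hS, rfl⟩
      obtain ⟨s', hs', -⟩ := (mem_contextSets.mp hS).2.2 [] (mem_listsLen.mpr (by simp))
      have hs'nil : s' = [] :=
        List.length_eq_zero_iff.mp (Nat.le_zero.mp ((mem_contextSets.mp hS).1 s' hs'))
      rw [root_singleton_of_mem hS (hs'nil ▸ hs'), modelPrior_singleton_zero]
      show _ ≤ Pmax m γ Pe 0 s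
      rw [Pmax]
      simp
  | succ d ih =>
    intro s
    constructor
    · -- membership : pick the better of the two candidates
      by_cases hc : (1 - γ) * ∏ j : Fin m, Pmax m γ Pe d (j :: s) ≤ γ * Pe s
      · refine ⟨{[]}, singleton_root_mem m (d + 1), ?_⟩
        show Pmax m γ Pe (d+1) s = _
        rw [Pmax, max_eq_left hc, modelPrior_singleton]
        simp
      · choose T hT hval using fun j : Fin m => (ih (j :: s)).1
        refine ⟨unionSet m T, unionSet_mem_contextSets hT, ?_⟩
        show Pmax m γ Pe (d+1) s = _
        rw [Pmax, max_eq_right (le_of_lt (not_le.mp hc)), modelPrior_unionSet hm γ hT,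
          unionSet_prod, mul_assoc, ← Finset.prod_mul_distrib]
        congr 1
        refine Finset.prod_congr rfl fun j _ => ?_
        rw [hval j]
        congr 1
        exact Finset.prod_congr rfl fun t _ => by simp
    · rintro x ⟨S, hS, rfl⟩
      by_cases h0 : ([] : List (Fin m)) ∈ S
      · rw [root_singleton_of_mem hS h0, modelPrior_singleton]
        simp only [Finset.prod_singleton, List.nil_append]
        show _ ≤ Pmax m γ Pe (d+1) s
        rw [Pmax]
        exact le_max_left _ _
      · have hd := decomp hS h0
        have hTj := fun j => childSet_mem_contextSets hS h0 j
        rw [hd, modelPrior_unionSet hm γ hTj, unionSet_prod, mul_assoc,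
          ← Finset.prod_mul_distrib]
        show _ ≤ Pmax m γ Pe (d+1) s
        rw [Pmax]
        refine le_trans ?_ (le_max_right _ _)
        refine mul_le_mul_of_nonneg_left ?_ (by linarith)
        refine Finset.prod_le_prod (fun j _ => ?_) (fun j _ => ?_)
        · refine mul_nonneg (mul_nonneg (pow_nonneg (by linarith) _)
            (pow_nonneg (by linarith) _)) ?_
          exact Finset.prod_nonneg fun t _ => (hPe _).le
        · have := (ih (j :: s)).2 ⟨childSet m d S j, hTj j, rfl⟩
          refine le_trans (le_of_eq ?_) this
          congr 1
          exact Finset.prod_congr rfl fun t _ => by simp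

/-- the root maximised probability is the maximum, over all
complete proper context sets `S ∈ C_D`, of `π_D(S) ∏_{s∈S} P_e(a_s)`. -/
theorem ctm_root_maximised_probability (m D : ℕ) (hm : 2 ≤ m) (γ : ℝ)
    (hγ : γ ∈ Set.Ioo (0:ℝ) 1) (Pe : List (Fin m) → ℝ) (hPe : ∀ s, 0 < Pe s) :
    IsGreatest {x : ℝ | ∃ S ∈ contextSets m D, x = modelPrior m γ D S * ∏ s ∈ S, Pe s}
      (Pmax m γ Pe D []) := by
  have h := key hm γ hγ Pe hPe D []
  simpa using h
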